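/- Define the formal power series in z (over the polynomial ring in p_1,\u2026,p_m,q_1,\u2026,q_m) G(z) = z / K^{\u27e8-1\u27e9}(z) where K(z) = z \u220f_{i=1}^m (1 - (q_i + s_{i+1})z) / \u220f_{i=1}^m (1 - (q_i + s_i)z) with s_i = p_i + p_{i+1} + \u22ef + p_m (s_{m+1}=0), and R(z) = z / L^{\u27e8-1\u27e9}(z) where L(z) = z \u220f_{i=1}^m (1 - (q_i - r_i)z) / [(1 + r_m z) \u220f_{i=1}^m (1 - (q_i - r_{i-1})z)] with r_i = p_1 + \u22ef + p_i. Then R(z) = G(z) - (p_1 + \u22ef + p_m) z; i.e., the two series agree in every coefficient except the coefficient of z. -/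

import Mathlib

/-- The field `ℚ(p_1,…,p_m,q_1,…,q_m)`. -/
abbrev FF (m : ℕ) : Type := FractionRing (MvPolynomial (Fin m ⊕ Fin m) ℚ)

noncomputable def pvar {m : ℕ} (i : Fin m) : FF m :=
  algebraMap (MvPolynomial (Fin m ⊕ Fin m) ℚ) _ (MvPolynomial.X (Sum.inl i))
noncomputable def qvar {m : ℕ} (i : Fin m) : FF m :=
  algebraMap (MvPolynomial (Fin m ⊕ Fin m) ℚ) _ (MvPolynomial.X (Sum.inr i))

/-- `r_i = p_1 + ⋯ + p_i` (`r_0 = 0`). -/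
noncomputable def rsum {m : ℕ} (i : ℕ) : FF m :=
  ∑ j : Fin m, if (j : ℕ) < i then pvar j else 0

/-- `s_i = p_i + p_{i+1} + ⋯ + p_m`, 0-indexed: `ssum i = p_{i+1} + ⋯ + p_m`
in 1-based notation, so the 1-based `s_i` is `ssum (i-1)` and `s_{m+1} = ssum m = 0`. -/
noncomputable def ssum {m : ℕ} (i : ℕ) : FF m :=
  ∑ j : Fin m, if i ≤ (j : ℕ) then pvar j else 0

/-- The geometric series `1/(1 - a z)`. -/
noncomputable def geom {A : Type*} [CommRing A] (a : A) : PowerSeries A :=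
  PowerSeries.mk fun n => a ^ n

/-- Composition `f(g)` of formal power series (for `g` with zero constant term). -/
noncomputable def pscomp {A : Type*} [CommRing A] (f g : PowerSeries A) : PowerSeries A :=
  PowerSeries.mk fun n =>
    ∑ j ∈ Finset.range (n + 1), PowerSeries.coeff j f * PowerSeries.coeff n (g ^ j)

/-- `K(z) = z ∏_{i=1}^m (1 - (q_i + s_{i+1})z) / ∏_{i=1}^m (1 - (q_i + s_i)z)`,
expanded as a formal power series (0-indexed: `s_{i+1} ↦ ssum (i+1)`, `s_i ↦ ssum i`). -/
noncomputable def K14 (m : ℕ) : PowerSeries (FF m) :=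
  PowerSeries.X *
    (∏ i : Fin m, (1 - PowerSeries.C (qvar i + ssum ((i : ℕ) + 1)) * PowerSeries.X)) *
    ∏ i : Fin m, geom (qvar i + ssum (i : ℕ))

/-- `L(z) = z ∏_{i=1}^m (1 - (q_i - r_i)z) / [(1 + r_m z) ∏_{i=1}^m (1 - (q_i - r_{i-1})z)]`,
expanded as a formal power series (0-indexed: `r_i ↦ rsum (i+1)`, `r_{i-1} ↦ rsum i`). -/
noncomputable def L14 (m : ℕ) : PowerSeries (FF m) :=
  PowerSeries.X *
    (∏ i : Fin m, (1 - PowerSeries.C (qvar i - rsum ((i : ℕ) + 1)) * PowerSeries.X)) *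
    geom (-(rsum (m := m) m)) *
    ∏ i : Fin m, geom (qvar i - rsum (i : ℕ))

namespace TopDeg

open PowerSeries

variable {A : Type*} [CommRing A]

theorem mul_eq_one_unique {M : Type*} [CommMonoid M] {x y z : M}
    (hy : x * y = 1) (hz : x * z = 1) : y = z := by
  calc y = y * (x * z) := by rw [hz, mul_one]
  _ = (x * y) * z := by rw [← mul_assoc, mul_comm y x]
  _ = z := by rw [hy, one_mul]

theorem coeff_pow_zero {g : PowerSeries A} (hg : constantCoeff g = 0)
    {n j : ℕ} (h : n < j) : PowerSeries.coeff n (g ^ j) = 0 := by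
  have hx : (PowerSeries.X : PowerSeries A) ^ j ∣ g ^ j :=
    pow_dvd_pow_of_dvd (PowerSeries.X_dvd_iff.mpr hg) j
  exact PowerSeries.X_pow_dvd_iff.mp hx n h

theorem coeff_pscomp (f g : PowerSeries A) (n : ℕ) :
    coeff n (pscomp f g) =
      ∑ j ∈ Finset.range (n + 1), coeff j f * coeff n (g ^ j) :=
  coeff_mk _ _

theorem coeff_eval₂ {g : PowerSeries A} (hg : constantCoeff g = 0)
    (p : Polynomial A) (n : ℕ) :
    PowerSeries.coeff n (Polynomial.eval₂ (PowerSeries.C) g p)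
      = ∑ j ∈ Finset.range (n + 1), p.coeff j * PowerSeries.coeff n (g ^ j) := by
  rw [Polynomial.eval₂_eq_sum, Polynomial.sum, map_sum]
  simp_rw [PowerSeries.coeff_C_mul]
  rw [show p.support = p.support from rfl]
  have h1 : ∑ j ∈ p.support, p.coeff j * PowerSeries.coeff n (g ^ j)
      = ∑ j ∈ p.support ∩ Finset.range (n + 1), p.coeff j * PowerSeries.coeff n (g ^ j) := by
    refine (Finset.sum_subset Finset.inter_subset_left ?_).symm
    intro j hj hj'
    have : ¬ j < n + 1 := fun h => hj' (Finset.mem_inter.mpr ⟨hj, Finset.mem_range.mpr h⟩)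
    rw [coeff_pow_zero hg (by omega), mul_zero]
  have h2 : ∑ j ∈ Finset.range (n + 1), p.coeff j * PowerSeries.coeff n (g ^ j)
      = ∑ j ∈ p.support ∩ Finset.range (n + 1), p.coeff j * PowerSeries.coeff n (g ^ j) := by
    refine (Finset.sum_subset Finset.inter_subset_right ?_).symm
    intro j hj hj'
    have : j ∉ p.support := fun h => hj' (Finset.mem_inter.mpr ⟨h, hj⟩)
    rw [Polynomial.notMem_support_iff.mp this, zero_mul]
  rw [h1, h2]

theorem coeff_pscomp_eq {g : PowerSeries A} (hg : constantCoeff g = 0)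
    {f : PowerSeries A} {p : Polynomial A} {n : ℕ}
    (hp : ∀ j ≤ n, p.coeff j = coeff j f) :
    coeff n (pscomp f g) = coeff n (Polynomial.eval₂ (PowerSeries.C) g p) := by
  rw [coeff_pscomp, coeff_eval₂ hg]
  refine Finset.sum_congr rfl fun j hj => ?_
  rw [hp j (by simpa using Nat.lt_succ_iff.mp (Finset.mem_range.mp hj))]

theorem pscomp_mul (f f' g : PowerSeries A) (hg : constantCoeff g = 0) :
    pscomp (f * f') g = pscomp f g * pscomp f' g := by
  ext n
  have hf : coeff n (pscomp (f * f') g)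
      = coeff n (Polynomial.eval₂ (PowerSeries.C) g (trunc (n+1) f * trunc (n+1) f')) := by
    refine coeff_pscomp_eq hg fun j hj => ?_
    rw [Polynomial.coeff_mul, PowerSeries.coeff_mul]
    refine Finset.sum_congr rfl fun ab hab => ?_
    have hab' := Finset.HasAntidiagonal.mem_antidiagonal.mp hab
    rw [coeff_trunc, coeff_trunc, if_pos (by omega), if_pos (by omega)]
  rw [hf, Polynomial.eval₂_mul, PowerSeries.coeff_mul, PowerSeries.coeff_mul]
  refine Finset.sum_congr rfl fun ab hab => ?_
  have hab' := Finset.HasAntidiagonal.mem_antidiagonal.mp hab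
  congr 1
  · refine (coeff_pscomp_eq hg fun j hj => ?_).symm
    rw [coeff_trunc, if_pos (by omega)]
  · refine (coeff_pscomp_eq hg fun j hj => ?_).symm
    rw [coeff_trunc, if_pos (by omega)]

theorem pscomp_one (g : PowerSeries A) (hg : constantCoeff g = 0) :
    pscomp 1 g = 1 := by
  ext n
  rw [coeff_pscomp]
  rw [Finset.sum_eq_single 0]
  · simp
  · intro j hj hj0
    rw [PowerSeries.coeff_one, if_neg hj0, zero_mul]
  · intro h; exact absurd (Finset.mem_range.mpr (by omega)) h

noncomputable def pcHom (g : PowerSeries A) (hg : constantCoeff g = 0) :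
    PowerSeries A →+* PowerSeries A where
  toFun f := pscomp f g
  map_one' := pscomp_one g hg
  map_mul' f f' := pscomp_mul f f' g hg
  map_zero' := by ext n; simp [coeff_pscomp]
  map_add' f f' := by
    ext n
    simp [coeff_pscomp, add_mul, Finset.sum_add_distrib]

theorem pcHom_apply (g : PowerSeries A) (hg : constantCoeff g = 0) (f : PowerSeries A) :
    pcHom g hg f = pscomp f g := rfl

@[simp] theorem pcHom_X (g : PowerSeries A) (hg : constantCoeff g = 0) :
    pcHom g hg PowerSeries.X = g := by
  ext n
  rw [pcHom_apply, coeff_pscomp]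
  cases n with
  | zero =>
    simp only [Finset.range_one, Finset.sum_singleton, PowerSeries.coeff_X, pow_zero]
    simp [hg]
  | succ n =>
    rw [Finset.sum_eq_single 1]
    · simp
    · intro j hj hj1
      rw [PowerSeries.coeff_X, if_neg hj1, zero_mul]
    · intro h; exact absurd (Finset.mem_range.mpr (by omega)) h

@[simp] theorem pcHom_C (g : PowerSeries A) (hg : constantCoeff g = 0) (a : A) :
    pcHom g hg (PowerSeries.C a) = PowerSeries.C a := by
  ext n
  rw [pcHom_apply, coeff_pscomp]
  rw [Finset.sum_eq_single 0]
  · simp [PowerSeries.coeff_C]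
  · intro j hj hj0
    rw [PowerSeries.coeff_C, if_neg hj0, zero_mul]
  · intro h; exact absurd (Finset.mem_range.mpr (by omega)) h

theorem geom_inv (a : A) : (1 - PowerSeries.C a * PowerSeries.X) * geom a = 1 := by
  ext n
  rw [sub_mul, one_mul, map_sub]
  cases n with
  | zero =>
    simp [geom, PowerSeries.coeff_zero_eq_constantCoeff, constantCoeff_mk]
  | succ n =>
    rw [mul_assoc, PowerSeries.coeff_C_mul, PowerSeries.coeff_succ_X_mul]
    simp [geom, PowerSeries.coeff_mk, pow_succ, PowerSeries.coeff_one, mul_comm]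

theorem pcHom_geom (g : PowerSeries A) (hg : constantCoeff g = 0) (c : A) :
    (1 - PowerSeries.C c * g) * pcHom g hg (geom c) = 1 := by
  have h := congrArg (pcHom g hg) (geom_inv c)
  rw [map_one, map_mul, map_sub, map_one, map_mul, pcHom_C, pcHom_X] at h
  exact h

@[simp] theorem constantCoeff_geom (a : A) : constantCoeff (geom a) = 1 := by
  rw [geom, constantCoeff_mk, pow_zero]

theorem coeff_pow_congr {a b : PowerSeries A} (ha : constantCoeff a = 0)
    (hb : constantCoeff b = 0) {n j : ℕ} (hj : 2 ≤ j)
    (hcong : ∀ k < n, coeff k a = coeff k b) :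
    coeff n (a ^ j) = coeff n (b ^ j) := by
  have h1 : (PowerSeries.X : PowerSeries A) ^ n ∣ a - b :=
    PowerSeries.X_pow_dvd_iff.mpr fun k hk => by rw [map_sub, hcong k hk, sub_self]
  have h2 : (PowerSeries.X : PowerSeries A) ∣
      ∑ i ∈ Finset.range j, a ^ i * b ^ (j - 1 - i) := by
    refine Finset.dvd_sum fun i _ => ?_
    rcases Nat.eq_zero_or_pos i with h0 | h0
    · subst h0
      rw [pow_zero, one_mul]
      exact dvd_pow (PowerSeries.X_dvd_iff.mpr hb) (by omega)
    · exact ((dvd_pow (PowerSeries.X_dvd_iff.mpr ha) (by omega)).mul_right _)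
  have hd : (PowerSeries.X : PowerSeries A) ^ (n + 1) ∣ a ^ j - b ^ j := by
    rw [← geom_sum₂_mul, pow_succ, mul_comm ((PowerSeries.X : PowerSeries A) ^ n)]
    exact mul_dvd_mul h2 h1
  have := PowerSeries.X_pow_dvd_iff.mp hd n (by omega)
  rw [map_sub, sub_eq_zero] at this
  exact this

theorem pscomp_inj {A : Type*} [CommRing A] {f a b : PowerSeries A}
    (ha : constantCoeff a = 0) (hb : constantCoeff b = 0)
    (h1 : IsUnit (coeff 1 f)) (h : pscomp f a = pscomp f b) : a = b := by
  ext n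
  induction n using Nat.strong_induction_on with
  | _ n ih =>
    match n with
    | 0 => rw [PowerSeries.coeff_zero_eq_constantCoeff]; rw [ha, hb]
    | Nat.succ n =>
      have hc := congrArg (coeff (n + 1)) h
      rw [coeff_pscomp, coeff_pscomp] at hc
      have hsum : ∑ j ∈ Finset.range (n + 2),
          coeff j f * (coeff (n+1) (a ^ j) - coeff (n+1) (b ^ j)) = 0 := by
        simp_rw [mul_sub]
        rw [Finset.sum_sub_distrib, hc, sub_self]
      rw [Finset.sum_eq_single 1] at hsum
      · rw [pow_one, pow_one] at hsum
        have hD : coeff (n+1) a - coeff (n+1) b = 0 :=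
          h1.mul_left_cancel (show _ = coeff 1 f * 0 by rw [hsum, mul_zero])
        exact sub_eq_zero.mp hD
      · intro j hj hj1
        match j with
        | 0 => simp
        | 1 => exact absurd rfl hj1
        | (k+2) =>
          rw [coeff_pow_congr ha hb (by omega) fun k hk => ih k (by omega), sub_self, mul_zero]
      · intro hmem; exact absurd (Finset.mem_range.mpr (by omega)) hmem

end TopDeg

open PowerSeries TopDeg

theorem rsum_sub (m k : ℕ) : (rsum (m := m) m) - rsum k = ssum k := by
  rw [rsum, rsum, ssum, ← Finset.sum_sub_distrib]
  refine Finset.sum_congr rfl fun j _ => ?_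
  have hj : (j : ℕ) < m := j.isLt
  by_cases h : (j : ℕ) < k
  · rw [if_pos hj, if_pos h, if_neg (by omega), sub_self]
  · rw [if_pos hj, if_neg h, if_pos (by omega), sub_zero]


set_option maxHeartbeats 2000000 in
/-- With `G(z) = z / K⟨-1⟩(z)` and `R(z) = z / L⟨-1⟩(z)`
(the compositional inverses and the quotients being encoded by the hypotheses),
`R(z) = G(z) - (p_1 + ⋯ + p_m) z`. -/
theorem top_degree_series_agree (m : ℕ)
    (Kinv Linv G R : PowerSeries (FF m))
    (hK0 : PowerSeries.constantCoeff Kinv = 0)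
    (hL0 : PowerSeries.constantCoeff Linv = 0)
    (hKinv : pscomp (K14 m) Kinv = PowerSeries.X)
    (hLinv : pscomp (L14 m) Linv = PowerSeries.X)
    (hG : G * Kinv = PowerSeries.X)
    (hR : R * Linv = PowerSeries.X) :
    R = G - PowerSeries.C (∑ j : Fin m, pvar j) * PowerSeries.X := by
  set CC := (PowerSeries.C : FF m →+* PowerSeries (FF m)) with hCC
  set r : FF m := rsum (m := m) m with hrdef
  set Pu := pcHom Kinv hK0 with hPu
  set S := Pu (geom r) with hSdef
  have hv0 : constantCoeff (Kinv * S) = 0 := by rw [map_mul, hK0, zero_mul]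
  set v := Kinv * S with hvdef
  set Pv := pcHom v hv0 with hPv
  have hS : (1 - CC r * Kinv) * S = 1 := pcHom_geom Kinv hK0 r
  have hru : (1 - CC r * Kinv) ≠ 0 := by
    intro h
    have := congrArg (constantCoeff) h
    rw [map_sub, map_one, map_mul, constantCoeff_C, hK0, mul_zero, sub_zero, map_zero] at this
    exact one_ne_zero this
  -- (K1)
  have hK1 : ∀ a : FF m, 1 - CC a * v = (1 - CC (a + r) * Kinv) * S := by
    intro a
    apply mul_right_cancel₀ hru
    rw [map_add]
    linear_combination (-(1 - CC r * Kinv)) * hS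
  have hSv : 1 + CC r * v = S := by
    have h := hK1 (-r)
    rw [neg_add_cancel, map_zero, zero_mul, sub_zero, one_mul, map_neg, neg_mul,
      sub_neg_eq_add] at h
    exact h
  -- T
  have hT : Pv (geom (-r)) = 1 - CC r * Kinv := by
    have hgT := pcHom_geom v hv0 (-r)
    rw [map_neg, neg_mul, sub_neg_eq_add, hSv] at hgT
    exact mul_eq_one_unique hgT (by rw [mul_comm] at hS; exact hS)
  -- T_i
  have hfac2 : ∀ i : Fin m, Pv (geom (qvar i - rsum (i : ℕ)))
      = Pu (geom (qvar i + ssum (i : ℕ))) * (1 - CC r * Kinv) := by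
    intro i
    have h1 := pcHom_geom v hv0 (qvar i - rsum (i : ℕ))
    have hd : qvar i - rsum (i : ℕ) + r = qvar i + ssum (i : ℕ) := by
      rw [← rsum_sub m (i : ℕ)]; ring
    rw [hK1 (qvar i - rsum (i : ℕ)), hd] at h1
    have h2 := pcHom_geom Kinv hK0 (qvar i + ssum (i : ℕ))
    refine mul_eq_one_unique h1 ?_
    linear_combination ((1 - CC r * Kinv) * S) * h2 + hS
  have hfac1 : ∀ i : Fin m, Pv (1 - CC (qvar i - rsum ((i : ℕ) + 1)) * PowerSeries.X)
      = (1 - CC (qvar i + ssum ((i : ℕ) + 1)) * Kinv) * S := by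
    intro i
    rw [map_sub, map_one, map_mul, pcHom_C, pcHom_X]
    have hd : qvar i - rsum ((i : ℕ) + 1) + r = qvar i + ssum ((i : ℕ) + 1) := by
      rw [← rsum_sub m ((i : ℕ) + 1)]; ring
    rw [hK1 (qvar i - rsum ((i : ℕ) + 1)), hd]
  -- decomposition of K14 composed with Kinv
  have hKX : Kinv * (∏ i : Fin m, (1 - CC (qvar i + ssum ((i : ℕ) + 1)) * Kinv))
      * ∏ i : Fin m, Pu (geom (qvar i + ssum (i : ℕ))) = PowerSeries.X := by
    have : Pu (K14 m) = PowerSeries.X := hKinv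
    rw [K14, map_mul, map_mul, map_prod, map_prod, pcHom_X] at this
    rw [← this]
    congr 1
    congr 1
    refine Finset.prod_congr rfl fun i _ => ?_
    rw [map_sub, map_one, map_mul, pcHom_C, pcHom_X]
  -- L composed with v equals X
  have hL' : pscomp (L14 m) v = PowerSeries.X := by
    have : Pv (L14 m) = pscomp (L14 m) v := rfl
    rw [← this, L14, map_mul, map_mul, map_mul, map_prod, map_prod, pcHom_X,
      Finset.prod_congr rfl (fun i _ => hfac1 i),
      Finset.prod_congr rfl (fun i _ => hfac2 i), hT,
      Finset.prod_mul_distrib, Finset.prod_mul_distrib,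
      Finset.prod_const, Finset.prod_const, Finset.card_univ, Fintype.card_fin]
    calc v * ((∏ i : Fin m, (1 - CC (qvar i + ssum ((i : ℕ) + 1)) * Kinv)) * S ^ m)
          * (1 - CC r * Kinv)
          * ((∏ i : Fin m, Pu (geom (qvar i + ssum (i : ℕ)))) * (1 - CC r * Kinv) ^ m)
        = (Kinv * (∏ i : Fin m, (1 - CC (qvar i + ssum ((i : ℕ) + 1)) * Kinv))
            * ∏ i : Fin m, Pu (geom (qvar i + ssum (i : ℕ))))
            * (((1 - CC r * Kinv) * S) ^ (m + 1)) := by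
          rw [hvdef, mul_pow, pow_succ, pow_succ]; ring
      _ = PowerSeries.X := by rw [hS, one_pow, mul_one, hKX]
  -- uniqueness of compositional inverse
  have hcoeff1 : IsUnit (coeff 1 (L14 m)) := by
    have : (L14 m) = PowerSeries.X *
        ((∏ i : Fin m, (1 - CC (qvar i - rsum ((i : ℕ) + 1)) * PowerSeries.X)) *
          geom (-(rsum (m := m) m)) *
          ∏ i : Fin m, geom (qvar i - rsum (i : ℕ))) := by
      rw [L14]; ring
    rw [this, PowerSeries.coeff_succ_X_mul, PowerSeries.coeff_zero_eq_constantCoeff,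
      map_mul, map_mul, map_prod, constantCoeff_geom]
    have h1 : ∀ i : Fin m, constantCoeff (1 - CC (qvar i - rsum ((i : ℕ) + 1)) * PowerSeries.X) = 1 := by
      intro i
      rw [map_sub, map_one, map_mul, constantCoeff_X, mul_zero, sub_zero]
    rw [Finset.prod_congr rfl (fun i _ => h1 i), Finset.prod_const_one, one_mul, one_mul]
    simp only [map_prod, constantCoeff_geom, Finset.prod_const_one]
    exact isUnit_one
  have hLv : Linv = v :=
    pscomp_inj hL0 hv0 hcoeff1 (hLinv.trans hL'.symm)
  -- final algebra
  have hune : Kinv ≠ 0 := by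
    intro h
    rw [h, mul_zero] at hG
    exact PowerSeries.X_ne_zero hG.symm
  rw [hLv, hvdef] at hR
  have hGRS : R * S = G := by
    apply mul_right_cancel₀ hune
    linear_combination hR - hG
  have hsum : (∑ j : Fin m, pvar (m := m) j) = r := by
    rw [hrdef, rsum]
    exact Finset.sum_congr rfl fun j _ => (if_pos j.isLt).symm
  rw [hsum]
  linear_combination hGRS - CC r * hR - R * hS
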